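/- Let (Ω, 𝔽, P) be a probability space, let s ≥ 1 be an integer, and let X_1, …, X_s be independent random variables, each taking values in [0,1] almost surely and each with expectation μ. Then for every integer T ≥ s + 1, P( ∃ n ∈ {s, s+1, …, T−1} such that (1/s)·∑_{k=1}^s X_k − μ > √(3·log n / (2s)) ) ≤ 3/(2s²). -/

import Mathlib

open MeasureTheory ProbabilityTheory

/-- Key analytic inequality behind Hoeffding's lemma. -/
lemma hoeff_key (p : ℝ) (hp0 : 0 ≤ p) (hp1 : p ≤ 1) (t : ℝ) :
    1 - p + p * Real.exp t ≤ Real.exp (p * t + t ^ 2 / 8) := by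
  set u : ℝ → ℝ := fun x => 1 - p + p * Real.exp x with hu_def
  have hu : ∀ x, 0 < u x := by
    intro x
    rcases eq_or_lt_of_le hp0 with h | h
    · simp [hu_def, ← h]
    · have : 0 < p * Real.exp x := mul_pos h (Real.exp_pos x)
      have : (0:ℝ) ≤ 1 - p := by linarith
      simp only [hu_def]; linarith
  set g : ℝ → ℝ := fun x => p * Real.exp x / u x with hg_def
  set φ : ℝ → ℝ := fun x => g x - p - x / 4 with hφ_def
  set f : ℝ → ℝ := fun x => Real.log (u x) - p * x - x ^ 2 / 8 with hf_def
  have hu' : ∀ x, HasDerivAt u (p * Real.exp x) x := by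
    intro x
    exact ((Real.hasDerivAt_exp x).const_mul p).const_add (1 - p)
  have hf' : ∀ x, HasDerivAt f (φ x) x := by
    intro x
    have h1 : HasDerivAt (fun x => Real.log (u x)) (p * Real.exp x / u x) x :=
      (hu' x).log (hu x).ne'
    have h2 : HasDerivAt (fun x : ℝ => p * x) p x := by
      simpa using (hasDerivAt_id x).const_mul p
    have h3 : HasDerivAt (fun x : ℝ => x ^ 2 / 8) (x / 4) x := by
      have := (hasDerivAt_pow 2 x).div_const 8
      refine this.congr_deriv ?_
      norm_num
      ring
    have := (h1.sub h2).sub h3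
    convert this using 1
    all_goals rfl
  have hg' : ∀ x, HasDerivAt g (g x * (1 - g x)) x := by
    intro x
    have hnum : HasDerivAt (fun x => p * Real.exp x) (p * Real.exp x) x :=
      (Real.hasDerivAt_exp x).const_mul p
    have := hnum.div (hu' x) (hu x).ne'
    refine this.congr_deriv ?_
    have hux := (hu x).ne'
    simp only [hg_def]
    field_simp
  have hφ' : ∀ x, HasDerivAt φ (g x * (1 - g x) - 1 / 4) x := by
    intro x
    have h2 : HasDerivAt (fun x : ℝ => x / 4) (1 / 4) x := by
      simpa using (hasDerivAt_id x).div_const 4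
    have := ((hg' x).sub_const p).sub h2
    convert this using 1
    all_goals rfl
  have hφanti : Antitone φ := by
    apply antitone_of_deriv_nonpos (fun x => (hφ' x).differentiableAt)
    intro x
    rw [(hφ' x).deriv]
    nlinarith [sq_nonneg (g x - 1 / 2)]
  have hu0 : u 0 = 1 := by simp [hu_def]
  have hφ0 : φ 0 = 0 := by
    simp [hφ_def, hg_def, hu0]
  have hf0 : f 0 = 0 := by simp [hf_def, hu0]
  have hfle : ∀ x, f x ≤ 0 := by
    intro x
    rcases le_total 0 x with hx | hx
    · have hanti : AntitoneOn f (Set.Ici (0:ℝ)) := by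
        apply antitoneOn_of_deriv_nonpos (convex_Ici 0)
        · exact fun y _ => ((hf' y).differentiableAt).continuousAt.continuousWithinAt
        · exact fun y _ => ((hf' y).differentiableAt).differentiableWithinAt
        · intro y hy
          rw [(hf' y).deriv]
          have : φ y ≤ φ 0 := hφanti (le_of_lt (by simpa using hy))
          linarith [hφ0 ▸ this]
      have := hanti (Set.self_mem_Ici) (Set.mem_Ici.mpr hx) hx
      linarith [hf0 ▸ this]
    · have hmono : MonotoneOn f (Set.Iic (0:ℝ)) := by
        apply monotoneOn_of_deriv_nonneg (convex_Iic 0)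
        · exact fun y _ => ((hf' y).differentiableAt).continuousAt.continuousWithinAt
        · exact fun y _ => ((hf' y).differentiableAt).differentiableWithinAt
        · intro y hy
          rw [(hf' y).deriv]
          have : φ 0 ≤ φ y := hφanti (le_of_lt (by simpa using hy))
          linarith [hφ0 ▸ this]
      have := hmono (Set.mem_Iic.mpr hx) (Set.self_mem_Iic) hx
      linarith [hf0 ▸ this]
  have hft := hfle t
  have : Real.log (u t) ≤ p * t + t ^ 2 / 8 := by
    simp only [hf_def] at hft; linarith
  have := (Real.log_le_iff_le_exp (hu t)).mp this
  simpa [hu_def] using this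

/-- Hoeffding-type bound on the mgf of a `[0,1]`-valued random variable. -/
lemma mgf_le_of_Icc {Ω : Type*} [MeasurableSpace Ω] (P : Measure Ω) [IsProbabilityMeasure P]
    (Y : Ω → ℝ) (hY : Measurable Y) (hr : ∀ᵐ ω ∂P, Y ω ∈ Set.Icc (0:ℝ) 1)
    (μ : ℝ) (hmean : ∫ ω, Y ω ∂P = μ) (t : ℝ) :
    mgf Y P t ≤ Real.exp (t * μ + t ^ 2 / 8) := by
  have hYint : Integrable Y P := by
    refine (integrable_const (1:ℝ)).mono' hY.aestronglyMeasurable ?_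
    filter_upwards [hr] with ω hω
    rw [Real.norm_eq_abs, abs_of_nonneg hω.1]; exact hω.2
  have hp0 : 0 ≤ μ := by
    rw [← hmean]; exact integral_nonneg_of_ae (hr.mono fun ω h => h.1)
  have hp1 : μ ≤ 1 := by
    rw [← hmean]
    calc ∫ ω, Y ω ∂P ≤ ∫ _ω, (1:ℝ) ∂P :=
          integral_mono_ae hYint (integrable_const 1) (hr.mono fun ω h => h.2)
      _ = 1 := by simp
  have hpt : ∀ᵐ ω ∂P, Real.exp (t * Y ω) ≤ (1 - Y ω) + Y ω * Real.exp t := by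
    filter_upwards [hr] with ω hω
    have h := convexOn_exp.2 (Set.mem_univ (0:ℝ)) (Set.mem_univ t)
      (by linarith [hω.2] : (0:ℝ) ≤ 1 - Y ω) hω.1 (by ring)
    simpa [smul_eq_mul, mul_comm] using h
  have hexp_int : Integrable (fun ω => Real.exp (t * Y ω)) P := by
    refine (integrable_const (Real.exp |t|)).mono'
      ((hY.const_mul t).exp).aestronglyMeasurable ?_
    filter_upwards [hr] with ω hω
    rw [Real.norm_eq_abs, abs_of_nonneg (Real.exp_pos _).le, Real.exp_le_exp]
    calc t * Y ω ≤ |t * Y ω| := le_abs_self _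
      _ = |t| * |Y ω| := abs_mul _ _
      _ ≤ |t| * 1 := by
          have : |Y ω| ≤ 1 := abs_le.mpr ⟨by linarith [hω.1], hω.2⟩
          exact mul_le_mul_of_nonneg_left this (abs_nonneg t)
      _ = |t| := mul_one _
  have hrhs_int : Integrable (fun ω => (1 - Y ω) + Y ω * Real.exp t) P :=
    ((integrable_const (1:ℝ)).sub hYint).add (hYint.mul_const _)
  have hint_le : mgf Y P t ≤ 1 - μ + μ * Real.exp t := by
    have := integral_mono_ae hexp_int hrhs_int hpt
    rw [mgf]
    calc ∫ ω, Real.exp (t * Y ω) ∂P ≤ ∫ ω, ((1 - Y ω) + Y ω * Real.exp t) ∂P := this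
      _ = ∫ ω, (1 + Y ω * (Real.exp t - 1)) ∂P :=
          integral_congr_ae (Filter.Eventually.of_forall fun ω => by ring)
      _ = 1 - μ + μ * Real.exp t := by
          rw [integral_add (integrable_const 1) (hYint.mul_const _),
            integral_mul_const, hmean]
          simp; ring
  calc mgf Y P t ≤ 1 - μ + μ * Real.exp t := hint_le
    _ ≤ Real.exp (μ * t + t ^ 2 / 8) := hoeff_key μ hp0 hp1 t
    _ = Real.exp (t * μ + t ^ 2 / 8) := by rw [mul_comm μ t]

theorem bad_event_F_bound {Ω : Type*} [MeasurableSpace Ω]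
    (P : Measure Ω) [IsProbabilityMeasure P]
    (s : ℕ) (hs : 1 ≤ s) (X : Fin s → Ω → ℝ) (μ : ℝ)
    (hmeas : ∀ k, Measurable (X k))
    (hindep : iIndepFun X P)
    (hrange : ∀ k, ∀ᵐ ω ∂P, X k ω ∈ Set.Icc (0 : ℝ) 1)
    (hmean : ∀ k, P[X k] = μ) :
    ∀ T : ℕ, s + 1 ≤ T →
      P {ω | ∃ n ∈ Finset.Icc s (T - 1),
          (1 / (s : ℝ)) * ∑ k, X k ω - μ > Real.sqrt (3 * Real.log n / (2 * s))}
        ≤ ENNReal.ofReal (3 / (2 * (s : ℝ) ^ 2)) := by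
  intro T hT
  have hs0 : (0:ℝ) < s := by exact_mod_cast hs
  set ε : ℝ := Real.sqrt (3 * Real.log s / (2 * s)) with hε_def
  have hε0 : 0 ≤ ε := Real.sqrt_nonneg _
  have hlogs : 0 ≤ Real.log s := Real.log_nonneg (by exact_mod_cast hs)
  have hεsq : ε ^ 2 = 3 * Real.log s / (2 * s) := by
    rw [hε_def, Real.sq_sqrt (by positivity)]
  -- Step 1: reduce to a single event
  have hsub : {ω | ∃ n ∈ Finset.Icc s (T - 1),
      (1 / (s : ℝ)) * ∑ k, X k ω - μ > Real.sqrt (3 * Real.log n / (2 * s))}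
      ⊆ {ω | (s:ℝ) * μ + (s:ℝ) * ε ≤ (∑ k, X k) ω} := by
    intro ω hω
    obtain ⟨n, hn, hgt⟩ := hω
    have hns : s ≤ n := (Finset.mem_Icc.mp hn).1
    have hlog : Real.log s ≤ Real.log n :=
      Real.log_le_log hs0 (by exact_mod_cast hns)
    have hεn : ε ≤ Real.sqrt (3 * Real.log n / (2 * s)) := by
      apply Real.sqrt_le_sqrt
      gcongr
    have h1 : μ + ε < (1 / (s:ℝ)) * ∑ k, X k ω := by
      have := lt_of_le_of_lt hεn (by linarith : Real.sqrt (3 * Real.log n / (2 * s))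
        < (1 / (s : ℝ)) * ∑ k, X k ω - μ)
      linarith
    have h2 : (s:ℝ) * (μ + ε) < (s:ℝ) * ((1 / (s:ℝ)) * ∑ k, X k ω) :=
      mul_lt_mul_of_pos_left h1 hs0
    have h3 : (s:ℝ) * ((1 / (s:ℝ)) * ∑ k, X k ω) = ∑ k, X k ω := by
      field_simp
    rw [h3] at h2
    simp only [Set.mem_setOf_eq, Finset.sum_apply]
    linarith
  -- Step 2: Chernoff bound with t = 4ε
  set t : ℝ := 4 * ε with ht_def
  have ht0 : 0 ≤ t := by positivity
  have hSmeas : Measurable (∑ k, X k) := by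
    have h : (∑ k, X k) = fun a => ∑ k, X k a := by ext a; simp
    rw [h]; exact Finset.measurable_sum _ (fun k _ => hmeas k)
  have hint : Integrable (fun ω => Real.exp (t * (∑ k, X k) ω)) P := by
    refine (integrable_const (Real.exp (t * s))).mono'
      ((hSmeas.const_mul t).exp).aestronglyMeasurable ?_
    have hall : ∀ᵐ ω ∂P, ∀ k, X k ω ∈ Set.Icc (0:ℝ) 1 := ae_all_iff.mpr hrange
    filter_upwards [hall] with ω hω
    rw [Real.norm_eq_abs, abs_of_nonneg (Real.exp_pos _).le, Real.exp_le_exp]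
    have hsum : (∑ k, X k) ω ≤ s := by
      simp only [Finset.sum_apply]
      calc ∑ k, X k ω ≤ ∑ _k : Fin s, (1:ℝ) :=
            Finset.sum_le_sum (fun k _ => (hω k).2)
        _ = s := by simp
    exact mul_le_mul_of_nonneg_left hsum ht0
  have hchern := measure_ge_le_exp_mul_mgf (μ := P) (X := ∑ k, X k)
    ((s:ℝ) * μ + (s:ℝ) * ε) ht0 hint
  -- Step 3: bound the mgf
  have hmgf : mgf (∑ k, X k) P t ≤ Real.exp ((s:ℝ) * (t * μ + t ^ 2 / 8)) := by
    rw [hindep.mgf_sum hmeas Finset.univ]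
    calc ∏ k : Fin s, mgf (X k) P t
        ≤ ∏ _k : Fin s, Real.exp (t * μ + t ^ 2 / 8) := by
          apply Finset.prod_le_prod (fun k _ => mgf_nonneg)
          exact fun k _ => mgf_le_of_Icc P (X k) (hmeas k) (hrange k) μ (hmean k) t
      _ = Real.exp ((s:ℝ) * (t * μ + t ^ 2 / 8)) := by
          rw [Finset.prod_const, ← Real.exp_nat_mul]
          simp
  -- Step 4: combine and compute
  have hfinal : Real.exp (-t * ((s:ℝ) * μ + (s:ℝ) * ε)) * mgf (∑ k, X k) P t
      ≤ 3 / (2 * (s:ℝ) ^ 2) := by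
    have h1 : Real.exp (-t * ((s:ℝ) * μ + (s:ℝ) * ε)) * mgf (∑ k, X k) P t
        ≤ Real.exp (-t * ((s:ℝ) * μ + (s:ℝ) * ε)) * Real.exp ((s:ℝ) * (t * μ + t ^ 2 / 8)) :=
      mul_le_mul_of_nonneg_left hmgf (Real.exp_pos _).le
    have h2 : Real.exp (-t * ((s:ℝ) * μ + (s:ℝ) * ε)) * Real.exp ((s:ℝ) * (t * μ + t ^ 2 / 8))
        = Real.exp (-(3 * Real.log s)) := by
      rw [← Real.exp_add]
      congr 1
      have : (s:ℝ) * ε ^ 2 = 3 * Real.log s / 2 := by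
        rw [hεsq]; field_simp
      rw [ht_def]; nlinarith [this]
    have h3 : Real.exp (-(3 * Real.log s)) = ((s:ℝ) ^ 3)⁻¹ := by
      rw [Real.exp_neg]
      congr 1
      rw [show (3:ℝ) * Real.log s = Real.log ((s:ℝ)^3) by
        rw [Real.log_pow]; push_cast; ring]
      exact Real.exp_log (by positivity)
    have h4 : ((s:ℝ) ^ 3)⁻¹ ≤ 3 / (2 * (s:ℝ) ^ 2) := by
      have h1s : (1:ℝ) ≤ s := by exact_mod_cast hs
      rw [inv_eq_one_div, div_le_div_iff₀ (by positivity) (by positivity)]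
      nlinarith [h1s]
    calc Real.exp (-t * ((s:ℝ) * μ + (s:ℝ) * ε)) * mgf (∑ k, X k) P t
        ≤ Real.exp (-(3 * Real.log s)) := by rw [← h2]; exact h1
      _ = ((s:ℝ) ^ 3)⁻¹ := h3
      _ ≤ 3 / (2 * (s:ℝ) ^ 2) := h4
  -- Conclude
  calc P {ω | ∃ n ∈ Finset.Icc s (T - 1),
          (1 / (s : ℝ)) * ∑ k, X k ω - μ > Real.sqrt (3 * Real.log n / (2 * s))}
      ≤ P {ω | (s:ℝ) * μ + (s:ℝ) * ε ≤ (∑ k, X k) ω} := measure_mono hsub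
    _ = ENNReal.ofReal ((P {ω | (s:ℝ) * μ + (s:ℝ) * ε ≤ (∑ k, X k) ω}).toReal) :=
        (ENNReal.ofReal_toReal (measure_ne_top P _)).symm
    _ ≤ ENNReal.ofReal (Real.exp (-t * ((s:ℝ) * μ + (s:ℝ) * ε)) * mgf (∑ k, X k) P t) :=
        ENNReal.ofReal_le_ofReal hchern
    _ ≤ ENNReal.ofReal (3 / (2 * (s : ℝ) ^ 2)) := ENNReal.ofReal_le_ofReal hfinal
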